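/- arXiv:2104.00895 — 2 statements merged into one kernel-verified Lean document; each statement's English description precedes it below -/
import Mathlib

section
/- Let m ≥ 2 be an integer, x_ℓ = exp(πiℓ/m), and k a nonnegative integer. Then S_k := ∑_{ℓ=1}^{m-1} (x_ℓ^{2k+1} - x_ℓ^{-2k-1})/(x_ℓ - x_ℓ^{-1}) = -2α_m(k) + m - 1, where α_m(k) is the least nonnegative residue of k modulo m. -/
open Complex

lemma termA (x : ℂ) (hx : x ≠ 0) (hx2 : x ^ 2 ≠ 1) (k : ℕ) :
    (x ^ (2 * (k : ℤ) + 1) - x ^ (-(2 * (k : ℤ) + 1))) / (x - x ^ (-1 : ℤ))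
      = ∑ j ∈ Finset.range (2 * k + 1), x ^ (2 * (j : ℤ) - 2 * k) := by
  have hne : x - x ^ (-1 : ℤ) ≠ 0 := by
    intro h
    apply hx2
    have h1 : x = x ^ (-1 : ℤ) := sub_eq_zero.mp h
    have : x * x = x ^ (-1 : ℤ) * x := by rw [← h1]
    rw [zpow_neg_one, inv_mul_cancel₀ hx] at this
    rw [sq, this]
  rw [eq_comm, eq_div_iff hne, Finset.sum_mul]
  have key : ∀ j ∈ Finset.range (2 * k + 1),
      x ^ (2 * (j : ℤ) - 2 * k) * (x - x ^ (-1 : ℤ))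
        = x ^ (2 * ((j : ℤ) + 1) - 2 * k - 1) - x ^ (2 * (j : ℤ) - 2 * k - 1) := by
    intro j _
    rw [mul_sub]
    congr 1
    · rw [show 2 * ((j : ℤ) + 1) - 2 * k - 1 = (2 * (j : ℤ) - 2 * k) + 1 by ring,
        zpow_add_one₀ hx]
    · rw [show 2 * (j : ℤ) - 2 * k - 1 = (2 * (j : ℤ) - 2 * k) + (-1) by ring,
        zpow_add₀ hx]
  rw [Finset.sum_congr rfl key]
  have := Finset.sum_range_sub (fun i => x ^ (2 * (i : ℤ) - 2 * k - 1)) (2 * k + 1)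
  simp only [Nat.cast_add, Nat.cast_mul, Nat.cast_ofNat, Nat.cast_one] at this ⊢
  rw [this]
  norm_num
  congr 1 <;> congr 1 <;> push_cast <;> ring

lemma innerB (m : ℕ) (hm : 2 ≤ m) (d : ℤ) :
    ∑ ℓ ∈ Finset.Icc 1 (m - 1), Complex.exp (2 * Real.pi * Complex.I * d / m) ^ (ℓ : ℕ)
      = if (m : ℤ) ∣ d then (m : ℂ) - 1 else -1 := by
  have hm0 : (m : ℂ) ≠ 0 := Nat.cast_ne_zero.mpr (by omega)
  set ζ : ℂ := Complex.exp (2 * Real.pi * Complex.I * d / m) with hζ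
  have hsum : (1 : ℂ) + ∑ ℓ ∈ Finset.Icc 1 (m - 1), ζ ^ ℓ = ∑ ℓ ∈ Finset.range m, ζ ^ ℓ := by
    rw [Finset.range_eq_Ico, Finset.sum_eq_sum_Ico_succ_bot (by omega : 0 < m)]
    rw [show Finset.Ico (0 + 1) m = Finset.Icc 1 (m - 1) by
      rw [show m = (m - 1) + 1 by omega, Finset.Ico_add_one_right_eq_Icc]; norm_num]
    simp
  by_cases hd : (m : ℤ) ∣ d
  · obtain ⟨c, hc⟩ := hd
    have hζ1 : ζ = 1 := by
      rw [hζ, hc]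
      rw [show 2 * (Real.pi : ℂ) * Complex.I * ((m : ℤ) * c : ℤ) / m
          = (c : ℤ) * (2 * Real.pi * Complex.I) by push_cast; field_simp]
      exact Complex.exp_int_mul_two_pi_mul_I c
    rw [if_pos ⟨c, hc⟩, hζ1]
    simp only [one_pow, Finset.sum_const, Nat.card_Icc, nsmul_eq_mul, mul_one]
    rw [Nat.cast_sub (by omega), Nat.cast_one]
    push_cast [Nat.sub_add_cancel (by omega : 1 ≤ m)]
    ring
  · have hζ1 : ζ ≠ 1 := by
      intro h
      rw [hζ, Complex.exp_eq_one_iff] at h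
      obtain ⟨n, hn⟩ := h
      apply hd
      refine ⟨n, ?_⟩
      have h2 : (2 : ℂ) * Real.pi * Complex.I ≠ 0 := by
        simp [Real.pi_ne_zero, Complex.I_ne_zero]
      rw [div_eq_iff hm0] at hn
      have h4 : (2 * (Real.pi : ℂ) * Complex.I) * d
          = (2 * (Real.pi : ℂ) * Complex.I) * ((m : ℂ) * n) := by linear_combination hn
      have h5 := mul_left_cancel₀ h2 h4
      exact_mod_cast h5
    have hζm : ζ ^ m = 1 := by
      rw [hζ, ← Complex.exp_nat_mul]
      rw [show (m : ℂ) * (2 * Real.pi * Complex.I * d / m) = (d : ℤ) * (2 * Real.pi * Complex.I) by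
        field_simp]
      exact Complex.exp_int_mul_two_pi_mul_I d
    have hgeom : ∑ ℓ ∈ Finset.range m, ζ ^ ℓ = 0 := by
      rw [geom_sum_eq hζ1, hζm]; simp
    rw [if_neg hd]
    have := hsum
    rw [hgeom] at this
    linear_combination this

lemma cardC (m k : ℕ) (hm : 2 ≤ m) :
    ((Finset.range (2 * k + 1)).filter (fun (j : ℕ) => (m : ℤ) ∣ (j : ℤ) - (k : ℤ))).card
      = 2 * (k / m) + 1 := by
  set q := k / m with hq
  set r := k % m with hr
  have hdm : m * q + r = k := Nat.div_add_mod k m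
  have hrm : r < m := Nat.mod_lt k (by omega)
  have hk : (m : ℤ) * q + r = k := by exact_mod_cast hdm
  have himg : (Finset.range (2 * k + 1)).filter (fun (j : ℕ) => (m : ℤ) ∣ (j : ℤ) - (k : ℤ))
      = (Finset.range (2 * q + 1)).image (fun t => r + m * t) := by
    ext j
    simp only [Finset.mem_filter, Finset.mem_range, Finset.mem_image]
    constructor
    · rintro ⟨hj, c, hc⟩
      have e1 : (j : ℤ) = r + m * ((q : ℤ) + c) := by linear_combination hc - hk
      have hge : 0 ≤ (q : ℤ) + c := by
        by_contra h
        push_neg at h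
        have h2 : (m : ℤ) * ((q : ℤ) + c) ≤ (m : ℤ) * (-1) :=
          mul_le_mul_of_nonneg_left (by omega) (by positivity)
        have h3 : (m : ℤ) * (-1) = -m := by ring
        omega
      have hlt : (q : ℤ) + c < 2 * q + 1 := by
        by_contra h
        push_neg at h
        have h2 : (m : ℤ) * (2 * (q : ℤ) + 1) ≤ (m : ℤ) * ((q : ℤ) + c) :=
          mul_le_mul_of_nonneg_left h (by positivity)
        have h3 : (m : ℤ) * (2 * (q : ℤ) + 1) = 2 * ((m : ℤ) * q) + m := by ring
        omega
      refine ⟨((q : ℤ) + c).toNat, ?_, ?_⟩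
      · have ht1 : (((q : ℤ) + c).toNat : ℤ) = (q : ℤ) + c := Int.toNat_of_nonneg hge
        omega
      · have ht1 : (((q : ℤ) + c).toNat : ℤ) = (q : ℤ) + c := Int.toNat_of_nonneg hge
        have : (r : ℤ) + m * (((q : ℤ) + c).toNat : ℤ) = j := by rw [ht1]; linarith [e1]
        exact_mod_cast this
    · rintro ⟨t, ht, rfl⟩
      have hub : m * t ≤ m * (2 * q) := Nat.mul_le_mul_left m (by omega)
      have h3 : m * (2 * q) = 2 * (m * q) := by ring
      refine ⟨by omega, ⟨(t : ℤ) - q, by push_cast; linear_combination hk⟩⟩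
  rw [himg, Finset.card_image_of_injective _ fun a b hab => ?_, Finset.card_range]
  have : m * a = m * b := by omega
  exact Nat.eq_of_mul_eq_mul_left (by omega) this




/-- For `m ≥ 2`, `x_ℓ = exp(πiℓ/m)` and a nonnegative integer `k`,
`∑_{ℓ=1}^{m-1} (x_ℓ^{2k+1} - x_ℓ^{-2k-1})/(x_ℓ - x_ℓ^{-1}) = -2 α_m(k) + m - 1`,
where `α_m(k)` is the least nonnegative residue of `k` mod `m`. -/
theorem sum_S_k (m : ℕ) (hm : 2 ≤ m) (k : ℕ) :
    ∑ ℓ ∈ Finset.Icc 1 (m - 1),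
      ((Complex.exp (Real.pi * Complex.I * ℓ / m)) ^ (2 * (k : ℤ) + 1)
        - (Complex.exp (Real.pi * Complex.I * ℓ / m)) ^ (-(2 * (k : ℤ) + 1)))
      / ((Complex.exp (Real.pi * Complex.I * ℓ / m))
        - (Complex.exp (Real.pi * Complex.I * ℓ / m)) ^ (-1 : ℤ))
      = -2 * (((k : ℤ) % (m : ℤ) : ℤ) : ℂ) + (m : ℂ) - 1 := by
  have hm0 : (m : ℂ) ≠ 0 := Nat.cast_ne_zero.mpr (by omega)
  have h2pi : (2 : ℂ) * Real.pi * Complex.I ≠ 0 := by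
    simp [Real.pi_ne_zero, Complex.I_ne_zero]
  have hx2 : ∀ ℓ ∈ Finset.Icc 1 (m - 1),
      (Complex.exp (Real.pi * Complex.I * ℓ / m)) ^ 2 ≠ 1 := by
    intro ℓ hℓ h
    simp only [Finset.mem_Icc] at hℓ
    rw [← Complex.exp_nat_mul, Complex.exp_eq_one_iff] at h
    obtain ⟨n, hn⟩ := h
    have h4 : (2 * (Real.pi : ℂ) * Complex.I) * ℓ
        = (2 * (Real.pi : ℂ) * Complex.I) * ((n : ℂ) * m) := by
      field_simp at hn
      linear_combination (↑Real.pi * Complex.I) * hn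
    have h5 := mul_left_cancel₀ h2pi h4
    have h6 : (ℓ : ℤ) = n * m := by exact_mod_cast h5
    have h7 : (m : ℤ) ∣ (ℓ : ℤ) := ⟨n, by linarith [h6]⟩
    have h8 : m ∣ ℓ := Int.ofNat_dvd.mp h7
    have := Nat.le_of_dvd (by omega) h8
    omega
  calc ∑ ℓ ∈ Finset.Icc 1 (m - 1),
      ((Complex.exp (Real.pi * Complex.I * ℓ / m)) ^ (2 * (k : ℤ) + 1)
        - (Complex.exp (Real.pi * Complex.I * ℓ / m)) ^ (-(2 * (k : ℤ) + 1)))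
      / ((Complex.exp (Real.pi * Complex.I * ℓ / m))
        - (Complex.exp (Real.pi * Complex.I * ℓ / m)) ^ (-1 : ℤ))
      = ∑ ℓ ∈ Finset.Icc 1 (m - 1), ∑ j ∈ Finset.range (2 * k + 1),
          (Complex.exp (Real.pi * Complex.I * ℓ / m)) ^ (2 * (j : ℤ) - 2 * k) :=
        Finset.sum_congr rfl fun ℓ hℓ =>
          termA _ (Complex.exp_ne_zero _) (hx2 ℓ hℓ) k
    _ = ∑ j ∈ Finset.range (2 * k + 1), ∑ ℓ ∈ Finset.Icc 1 (m - 1),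
          Complex.exp (2 * Real.pi * Complex.I * (((j : ℤ) - (k : ℤ)) : ℤ) / m) ^ (ℓ : ℕ) := by
        rw [Finset.sum_comm]
        refine Finset.sum_congr rfl fun j _ => Finset.sum_congr rfl fun ℓ _ => ?_
        rw [← Complex.exp_int_mul, ← Complex.exp_nat_mul]
        congr 1
        push_cast
        ring
    _ = ∑ j ∈ Finset.range (2 * k + 1),
          (if (m : ℤ) ∣ ((j : ℤ) - (k : ℤ)) then (m : ℂ) - 1 else -1) :=
        Finset.sum_congr rfl fun j _ => innerB m hm _
    _ = ((((Finset.range (2 * k + 1)).filter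
            (fun (j : ℕ) => (m : ℤ) ∣ (j : ℤ) - (k : ℤ))).card : ℂ)) * m - (2 * k + 1) := by
        have hsplit : ∀ j : ℕ, (if (m : ℤ) ∣ ((j : ℤ) - (k : ℤ)) then (m : ℂ) - 1 else -1)
            = (if (m : ℤ) ∣ ((j : ℤ) - (k : ℤ)) then (m : ℂ) else 0) - 1 := by
          intro j; split <;> ring
        simp only [hsplit]
        rw [Finset.sum_sub_distrib, ← Finset.sum_filter]
        simp [Finset.sum_const, mul_comm]
    _ = -2 * (((k : ℤ) % (m : ℤ) : ℤ) : ℂ) + (m : ℂ) - 1 := by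
        rw [cardC m k hm]
        have hk : (m : ℤ) * (k / m : ℕ) + (k % m : ℕ) = k := by
          exact_mod_cast Nat.div_add_mod k m
        have h2 : ((k % m : ℕ) : ℤ) = (k : ℤ) % (m : ℤ) := by push_cast; ring
        rw [← h2]
        have hz : ((2 * (k / m) + 1 : ℕ) : ℤ) * m - (2 * (k : ℤ) + 1)
            = -2 * ((k % m : ℕ) : ℤ) + m - 1 := by
          simp only [Nat.cast_add, Nat.cast_mul, Nat.cast_ofNat, Nat.cast_one]
          linear_combination (2 : ℤ) * hk
        exact_mod_cast hz
end

section
/- Let m ≥ 2 be an integer, n an integer, and set ℓ = α_m(n) (the least nonnegative residue of n mod m). Then β := (1/m) ∑_{r=0}^{m-1} r·[(2α_m(r-n) + 1 - m)/(2m) + (2α_m(r+n) + 1 - m)/(2m)] equals (m² - 1)/(6m) - ℓ(m - ℓ)/m. -/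
open Finset

lemma id_sum (k : ℕ) : 2 * ∑ r ∈ Finset.range k, (r:ℤ) = k*(k-1) := by
  induction k with
  | zero => simp
  | succ k ih => rw [Finset.sum_range_succ]; push_cast; push_cast at ih; ring_nf; ring_nf at ih; linarith

lemma sq_sum (k : ℕ) : 6 * ∑ r ∈ Finset.range k, (r:ℤ)^2 = k*(k-1)*(2*k-1) := by
  induction k with
  | zero => simp
  | succ k ih => rw [Finset.sum_range_succ]; push_cast; push_cast at ih; ring_nf; ring_nf at ih; linarith

/-- For `m ≥ 2`, an integer `n` and `ℓ = α_m(n)`, the quantity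
`β = (1/m) ∑_{r=0}^{m-1} r·[(2α_m(r-n)+1-m)/(2m) + (2α_m(r+n)+1-m)/(2m)]`
equals `(m²-1)/(6m) - ℓ(m-ℓ)/m`. -/
theorem beta_eval (m : ℤ) (hm : 2 ≤ m) (n : ℤ) :
    (1 / (m : ℚ)) * ∑ r ∈ Finset.range m.toNat,
      (r : ℚ) * (((2 * ((((r : ℤ) - n) % m : ℤ) : ℚ) + 1 - m) / (2 * m))
        + ((2 * ((((r : ℤ) + n) % m : ℤ) : ℚ) + 1 - m) / (2 * m)))
      = ((m : ℚ) ^ 2 - 1) / (6 * m)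
        - ((n % m : ℤ) : ℚ) * ((m : ℚ) - ((n % m : ℤ) : ℚ)) / m := by
  have hm0 : (0:ℤ) < m := by omega
  set ℓ : ℤ := n % m with hℓ
  clear_value ℓ
  have hℓ0 : 0 ≤ ℓ := by rw [hℓ]; exact Int.emod_nonneg n (by omega)
  have hℓm : ℓ < m := by rw [hℓ]; exact Int.emod_lt_of_pos n hm0
  -- key integer identity
  have key : 6 * ∑ r ∈ Finset.range m.toNat,
      (r:ℤ) * (((r:ℤ) - n) % m + ((r:ℤ) + n) % m + 1 - m)
      = m^3 - m + 6*m*ℓ^2 - 6*ℓ*m^2 := by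
    have step : ∀ r ∈ Finset.range m.toNat,
        (r:ℤ) * (((r:ℤ) - n) % m + ((r:ℤ) + n) % m + 1 - m)
        = (r:ℤ) * (2*r + 1 - m) + (if (r:ℤ) < ℓ then m*r else 0)
          - (if m ≤ (r:ℤ) + ℓ then m*r else 0) := by
      intro r hr
      have hrm : (r:ℤ) < m := by
        have := Finset.mem_range.mp hr; omega
      have hr0 : (0:ℤ) ≤ r := Int.natCast_nonneg r
      have e1 : ((r:ℤ) - n) % m = (r:ℤ) - ℓ + (if (r:ℤ) < ℓ then m else 0) := by
        have h1 : ((r:ℤ) - n) % m = ((r:ℤ) - ℓ) % m := by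
          rw [Int.sub_emod, hℓ, Int.sub_emod (r:ℤ) (n % m), Int.emod_emod_of_dvd n dvd_rfl]
        rw [h1]
        split_ifs with h
        · have h2 : ((r:ℤ) - ℓ) % m = ((r:ℤ) - ℓ + m*1) % m := by
            rw [Int.add_mul_emod_self_left]
          rw [h2]
          rw [Int.emod_eq_of_lt (by omega) (by omega)]; ring
        · rw [Int.emod_eq_of_lt (by omega) (by omega)]; ring
      have e2 : ((r:ℤ) + n) % m = (r:ℤ) + ℓ - (if m ≤ (r:ℤ) + ℓ then m else 0) := by
        have h1 : ((r:ℤ) + n) % m = ((r:ℤ) + ℓ) % m := by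
          rw [Int.add_emod, hℓ, Int.add_emod (r:ℤ) (n % m), Int.emod_emod_of_dvd n dvd_rfl]
        rw [h1]
        split_ifs with h
        · have : ((r:ℤ) + ℓ) % m = ((r:ℤ) + ℓ - m + m*1) % m := by ring_nf
          rw [this, Int.add_mul_emod_self_left, Int.emod_eq_of_lt (by omega) (by omega)]
        · rw [Int.emod_eq_of_lt (by omega) (by omega)]; ring
      rw [e1, e2]
      split_ifs <;> ring
    rw [Finset.sum_congr rfl step]
    rw [Finset.sum_sub_distrib, Finset.sum_add_distrib]
    -- compute the three pieces
    have hL : ℓ.toNat ≤ m.toNat := by omega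
    have hK : (m - ℓ).toNat ≤ m.toNat := by omega
    have i1 : ∑ r ∈ Finset.range m.toNat, (if (r:ℤ) < ℓ then m*(r:ℤ) else 0)
        = ∑ r ∈ Finset.range ℓ.toNat, m*(r:ℤ) := by
      rw [← Finset.sum_subset (Finset.range_subset_range.mpr hL)]
      · apply Finset.sum_congr rfl
        intro r hr
        have : (r:ℤ) < ℓ := by have := Finset.mem_range.mp hr; omega
        simp [this]
      · intro r hr hnr
        have : ¬ ((r:ℤ) < ℓ) := by
          simp only [Finset.mem_range] at hr hnr; omega
        simp [this]
    have i2 : ∑ r ∈ Finset.range m.toNat, (if m ≤ (r:ℤ) + ℓ then m*(r:ℤ) else 0)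
        = ∑ r ∈ Finset.range m.toNat, m*(r:ℤ) - ∑ r ∈ Finset.range (m-ℓ).toNat, m*(r:ℤ) := by
      have : ∀ r ∈ Finset.range m.toNat, (if m ≤ (r:ℤ) + ℓ then m*(r:ℤ) else 0)
          = m*(r:ℤ) - (if (r:ℤ) < m - ℓ then m*(r:ℤ) else 0) := by
        intro r hr; split_ifs with h1 h2 <;> first | ring1 | (exfalso; omega)
      rw [Finset.sum_congr rfl this, Finset.sum_sub_distrib]
      congr 1
      rw [← Finset.sum_subset (Finset.range_subset_range.mpr hK)]
      · apply Finset.sum_congr rfl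
        intro r hr
        have : (r:ℤ) < m - ℓ := by have := Finset.mem_range.mp hr; omega
        simp [this]
      · intro r hr hnr
        have : ¬ ((r:ℤ) < m - ℓ) := by
          simp only [Finset.mem_range] at hr hnr; omega
        simp [this]
    rw [i1, i2]
    have g1 := id_sum m.toNat
    have g2 := id_sum ℓ.toNat
    have g3 := id_sum (m-ℓ).toNat
    have g4 := sq_sum m.toNat
    have c1 : ((m.toNat : ℤ)) = m := Int.toNat_of_nonneg (by omega)
    have c2 : ((ℓ.toNat : ℤ)) = ℓ := Int.toNat_of_nonneg hℓ0
    have c3 : (((m-ℓ).toNat : ℤ)) = m - ℓ := Int.toNat_of_nonneg (by omega)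
    rw [c1] at g1 g4; rw [c2] at g2; rw [c3] at g3
    have expand : ∑ r ∈ Finset.range m.toNat, (r:ℤ) * (2*r + 1 - m)
        = 2 * ∑ r ∈ Finset.range m.toNat, (r:ℤ)^2
          + (1 - m) * ∑ r ∈ Finset.range m.toNat, (r:ℤ) := by
      rw [Finset.mul_sum, Finset.mul_sum, ← Finset.sum_add_distrib]
      apply Finset.sum_congr rfl; intro r _; ring
    rw [expand, ← Finset.mul_sum, ← Finset.mul_sum, ← Finset.mul_sum]
    linear_combination 2*g4 + 3*(1-m)*g1 + 3*m*g2 - 3*m*g1 + 3*m*g3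
  -- now pass to ℚ
  have hmQ : (m:ℚ) ≠ 0 := by
    have : (2:ℚ) ≤ (m:ℚ) := by exact_mod_cast hm
    linarith
  have sumeq : ∑ r ∈ Finset.range m.toNat,
      (r : ℚ) * (((2 * ((((r : ℤ) - n) % m : ℤ) : ℚ) + 1 - m) / (2 * m))
        + ((2 * ((((r : ℤ) + n) % m : ℤ) : ℚ) + 1 - m) / (2 * m)))
      = ((∑ r ∈ Finset.range m.toNat,
          (r:ℤ) * (((r:ℤ) - n) % m + ((r:ℤ) + n) % m + 1 - m) : ℤ) : ℚ) / m := by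
    push_cast
    rw [Finset.sum_div]
    apply Finset.sum_congr rfl
    intro r _
    field_simp
    ring
  rw [sumeq]
  set S : ℤ := ∑ r ∈ Finset.range m.toNat,
      (r:ℤ) * (((r:ℤ) - n) % m + ((r:ℤ) + n) % m + 1 - m) with hS
  have keyQ : (6:ℚ) * (S:ℚ) = (m:ℚ)^3 - m + 6*m*(ℓ:ℚ)^2 - 6*ℓ*(m:ℚ)^2 := by
    exact_mod_cast key
  have hSQ : (S:ℚ) = ((m:ℚ)^3 - m + 6*m*(ℓ:ℚ)^2 - 6*ℓ*(m:ℚ)^2)/6 := by linarith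
  rw [hSQ]
  field_simp
  ring
end
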